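/- arXiv:1807.01118 — 2 statements merged into one kernel-verified Lean document; each statement's English description precedes it below -/
import Mathlib

section
/- Fix $\varepsilon \in (0, e^{-2})$ and let $F_\varepsilon$ be the regularized entropy with $F_\varepsilon'' = 1/\lambda_\varepsilon$ and $F_\varepsilon'(1) = F_\varepsilon(1) = 0$. Then for all $s \geq 0$, $F_\varepsilon(s) \geq \frac{\varepsilon}{2} s^2 - 2$. -/
/-- If `f` is differentiable, `g` has the same derivative on `[a,b)`, `g` is continuous on
`[a,b]` and they agree at `a`, then they agree on `[a,b]`. -/
lemma aux_eq_on_Icc (f g : ℝ → ℝ) (a b : ℝ) (hf : Differentiable ℝ f)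
    (hg : ∀ x ∈ Set.Ico a b, HasDerivAt g (deriv f x) x)
    (hgc : ContinuousOn g (Set.Icc a b)) (ha : f a = g a) :
    ∀ x ∈ Set.Icc a b, f x = g x :=
  eq_of_has_deriv_right_eq (f' := fun x => deriv f x)
    (fun x _ => (hf x).hasDerivAt.hasDerivWithinAt)
    (fun x hx => (hg x hx).hasDerivWithinAt) hf.continuous.continuousOn hgc ha

/-- Lower bound of the regularized entropy on `[0,∞)`: `F_ε(s) ≥ (ε/2)s² − 2`, for `ε < e⁻²`. -/
theorem reg_entropy_lower_bound_pos (ε : ℝ) (hε : ε ∈ Set.Ioo (0 : ℝ) (Real.exp (-2)))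
    (Fε : ℝ → ℝ) (hC2 : ContDiff ℝ 2 Fε)
    (hF'' : ∀ s : ℝ, deriv (deriv Fε) s = (max ε (min s ε⁻¹))⁻¹)
    (hF'1 : deriv Fε 1 = 0) (hF1 : Fε 1 = 0) :
    ∀ s : ℝ, 0 ≤ s → ε / 2 * s ^ 2 - 2 ≤ Fε s := by
  obtain ⟨hε0, hε2⟩ := hε
  have hεexp1 : Real.exp (-2) < 1 := Real.exp_lt_one_iff.mpr (by norm_num)
  have hε1 : ε < 1 := hε2.trans hεexp1
  have hεinv : (1:ℝ) < ε⁻¹ := (one_lt_inv₀ hε0).mpr hε1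
  have hεε : ε * ε⁻¹ = 1 := mul_inv_cancel₀ (ne_of_gt hε0)
  have hlog : Real.log ε < -2 := by
    have := Real.log_lt_log hε0 hε2
    rwa [Real.log_exp] at this
  -- differentiability
  have hdiff : Differentiable ℝ Fε := hC2.differentiable (by norm_num)
  have hC1d : ContDiff ℝ 1 (deriv Fε) := by
    have := (contDiff_succ_iff_deriv (n := 1)).mp (by norm_num at hC2 ⊢; exact hC2)
    exact this.2.2
  have hdiff' : Differentiable ℝ (deriv Fε) := hC1d.differentiable one_ne_zero
  have hpos : ∀ x : ℝ, 0 ≤ deriv (deriv Fε) x := by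
    intro x
    rw [hF'' x]
    have : (0:ℝ) < max ε (min x ε⁻¹) := lt_of_lt_of_le hε0 (le_max_left _ _)
    positivity
  have hmono : Monotone (deriv Fε) := monotone_of_deriv_nonneg hdiff' hpos
  intro s hs
  by_cases hs1 : s ≤ 1
  · -- F is antitone on [0,1], so Fε s ≥ Fε 1 = 0
    have hanti : AntitoneOn Fε (Set.Icc 0 1) := by
      apply antitoneOn_of_deriv_nonpos (convex_Icc 0 1) hdiff.continuous.continuousOn
        hdiff.differentiableOn
      intro x hx
      rw [interior_Icc] at hx
      have : deriv Fε x ≤ deriv Fε 1 := hmono (le_of_lt hx.2)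
      linarith [hF'1]
    have h0 : (0:ℝ) ≤ Fε s := by
      have := hanti ⟨hs, hs1⟩ ⟨zero_le_one, le_rfl⟩ hs1
      rw [hF1] at this; linarith
    nlinarith [sq_nonneg s, mul_le_one₀ (le_of_lt hε1) (mul_self_nonneg s) (by nlinarith : s * s ≤ 1)]
  · push_neg at hs1
    -- on [1, ε⁻¹], deriv Fε = log and Fε = x log x - x + 1
    have key1 : ∀ x ∈ Set.Icc (1:ℝ) ε⁻¹, deriv Fε x = Real.log x := by
      apply aux_eq_on_Icc _ _ _ _ hdiff'
      · intro x hx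
        rw [hF'' x]
        have h1 : min x ε⁻¹ = x := min_eq_left (le_of_lt hx.2)
        have h2 : max ε x = x := max_eq_right (le_of_lt (lt_of_lt_of_le hε1 hx.1))
        rw [h1, h2]
        exact Real.hasDerivAt_log (by linarith [hx.1])
      · exact Real.continuousOn_log.mono (by
          intro x hx; simp only [Set.mem_compl_iff, Set.mem_singleton_iff]
          intro h; rw [h] at hx; exact absurd hx.1 (by norm_num))
      · simp [hF'1]
    have key2 : ∀ x ∈ Set.Icc (1:ℝ) ε⁻¹, Fε x = x * Real.log x - x + 1 := by
      apply aux_eq_on_Icc _ _ _ _ hdiff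
      · intro x hx
        have hx0 : (0:ℝ) < x := lt_of_lt_of_le one_pos hx.1
        rw [key1 x ⟨hx.1, le_of_lt hx.2⟩]
        have h1 : HasDerivAt (fun x : ℝ => x * Real.log x) (Real.log x + 1) x := by
          have := (hasDerivAt_id x).mul (Real.hasDerivAt_log (ne_of_gt hx0))
          refine this.congr_deriv ?_
          simp [ne_of_gt hx0]
        have h2 := (h1.sub (hasDerivAt_id x)).add_const 1
        refine h2.congr_deriv ?_
        ring
      · fun_prop (disch := intro x hx; exact ne_of_gt (lt_of_lt_of_le one_pos hx.1))
      · simp [hF1]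
    by_cases hs2 : s ≤ ε⁻¹
    · -- middle region
      have hFs : Fε s = s * Real.log s - s + 1 := key2 s ⟨le_of_lt hs1, hs2⟩
      rw [hFs]
      have hεs : ε * s ≤ 1 := by
        calc ε * s ≤ ε * ε⁻¹ := by nlinarith
        _ = 1 := hεε
      -- s log s ≥ 2s - 2√s
      set u := Real.sqrt s with hu
      have hu1 : 1 ≤ u := by
        rw [hu, show (1:ℝ) = Real.sqrt 1 by simp]
        exact Real.sqrt_le_sqrt (le_of_lt hs1)
      have hu0 : 0 < u := lt_of_lt_of_le one_pos hu1
      have hus : u ^ 2 = s := Real.sq_sqrt hs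
      have hlogs : Real.log s = 2 * Real.log u := by
        rw [hu, Real.log_sqrt hs]; ring
      have h5 : -Real.log u ≤ 1 / u - 1 := by
        have := Real.log_le_sub_one_of_pos (show (0:ℝ) < 1 / u by positivity)
        rwa [Real.log_div one_ne_zero (ne_of_gt hu0), Real.log_one, zero_sub] at this
      have hinv : u * (1 / u) = 1 := by field_simp
      have h6 : u - 1 ≤ u * Real.log u := by
        nlinarith [mul_nonneg (le_of_lt hu0) (by linarith : (0:ℝ) ≤ 1 / u - 1 + Real.log u)]
      have h7 : s * Real.log s = 2 * u * (u * Real.log u) := by rw [hlogs, ← hus]; ring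
      have h8 : 2 * u * (u - 1) ≤ 2 * u * (u * Real.log u) :=
        mul_le_mul_of_nonneg_left h6 (by linarith)
      have h9 : 2 * s - 2 * u ≤ s * Real.log s := by rw [h7]; nlinarith
      have h10 : ε * s ^ 2 ≤ s := by nlinarith [mul_le_mul_of_nonneg_right hεs hs]
      nlinarith [sq_nonneg (u - 2)]
    · -- region s > ε⁻¹
      push_neg at hs2
      have hFinv : Fε ε⁻¹ = ε⁻¹ * Real.log ε⁻¹ - ε⁻¹ + 1 :=
        key2 ε⁻¹ ⟨le_of_lt hεinv, le_rfl⟩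
      have hdFinv : deriv Fε ε⁻¹ = Real.log ε⁻¹ := key1 ε⁻¹ ⟨le_of_lt hεinv, le_rfl⟩
      have key3 : ∀ x ∈ Set.Icc ε⁻¹ s, deriv Fε x = Real.log ε⁻¹ - 1 + ε * x := by
        apply aux_eq_on_Icc _ _ _ _ hdiff'
        · intro x hx
          rw [hF'' x]
          have h1 : min x ε⁻¹ = ε⁻¹ := min_eq_right hx.1
          have h2 : max ε ε⁻¹ = ε⁻¹ := max_eq_right (by nlinarith)
          rw [h1, h2, inv_inv]
          simpa using ((hasDerivAt_id x).const_mul ε).const_add (Real.log ε⁻¹ - 1)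
        · fun_prop
        · rw [hdFinv, hεε]; ring
      have key4 : ∀ x ∈ Set.Icc ε⁻¹ s, Fε x =
          Fε ε⁻¹ + (Real.log ε⁻¹ - 1) * (x - ε⁻¹) + ε / 2 * (x ^ 2 - ε⁻¹ ^ 2) := by
        apply aux_eq_on_Icc _ _ _ _ hdiff
        · intro x hx
          rw [key3 x ⟨hx.1, le_of_lt hx.2⟩]
          have h1 : HasDerivAt (fun x : ℝ => Fε ε⁻¹ + (Real.log ε⁻¹ - 1) * (x - ε⁻¹)
              + ε / 2 * (x ^ 2 - ε⁻¹ ^ 2)) (Real.log ε⁻¹ - 1 + ε / 2 * (2 * x)) x := by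
            have ha : HasDerivAt (fun x : ℝ => (Real.log ε⁻¹ - 1) * (x - ε⁻¹))
                (Real.log ε⁻¹ - 1) x := by
              simpa using (((hasDerivAt_id x).sub_const ε⁻¹).const_mul (Real.log ε⁻¹ - 1))
            have hb : HasDerivAt (fun x : ℝ => ε / 2 * (x ^ 2 - ε⁻¹ ^ 2)) (ε / 2 * (2 * x)) x := by
              have h := ((hasDerivAt_pow 2 x).sub_const (ε⁻¹ ^ 2)).const_mul (ε / 2)
              refine h.congr_deriv ?_
              norm_num
            exact (ha.const_add (Fε ε⁻¹)).add hb
          convert h1 using 1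
          ring
        · fun_prop
        · simp
      have hFs := key4 s ⟨le_of_lt hs2, le_rfl⟩
      rw [hFs, hFinv]
      have hloginv : Real.log ε⁻¹ = -Real.log ε := Real.log_inv ε
      have hεe2 : ε * ε⁻¹ ^ 2 = ε⁻¹ := by
        rw [sq, ← mul_assoc, hεε, one_mul]
      have hslog : 2 * s ≤ s * (-Real.log ε) := by
        have hs0 : (0:ℝ) < s := lt_trans (lt_trans one_pos hεinv) hs2
        nlinarith
      rw [hloginv]
      linarith [hεe2, hslog, hs2, hεinv]
end

section
/- Fix $\varepsilon \in (0, e^{-2})$. If $F_\varepsilon$ is the regularized entropy (with $F''_\varepsilon = 1/\lambda_\varepsilon$, $F'_\varepsilon(1) = F_\varepsilon(1) = 0$), then $\frac{\varepsilon}{2} s^2 \leq F_\varepsilon(s) + 2$ for all $s \in \mathbb{R}$. -/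
/-- Tangent line inequality for a function with monotone derivative. -/
lemma tangent_line_le (g : ℝ → ℝ) (hg : Differentiable ℝ g)
    (hmono : Monotone (deriv g)) (a s : ℝ) :
    g a + deriv g a * (s - a) ≤ g s := by
  rcases lt_trichotomy a s with h | h | h
  · obtain ⟨c, hc, hcd⟩ := exists_hasDerivAt_eq_slope g (deriv g) h
      hg.continuous.continuousOn (fun x _ => (hg x).hasDerivAt)
    have h1 : deriv g a ≤ deriv g c := hmono hc.1.le
    rw [hcd] at h1
    have hs : 0 < s - a := sub_pos.2 h
    have h2 : deriv g a * (s - a) ≤ g s - g a := (le_div_iff₀ hs).1 h1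
    linarith
  · subst h; simp
  · obtain ⟨c, hc, hcd⟩ := exists_hasDerivAt_eq_slope g (deriv g) h
      hg.continuous.continuousOn (fun x _ => (hg x).hasDerivAt)
    have h1 : deriv g c ≤ deriv g a := hmono hc.2.le
    rw [hcd] at h1
    have hs : 0 < a - s := sub_pos.2 h
    have h2 : g a - g s ≤ deriv g a * (a - s) := (div_le_iff₀ hs).1 h1
    have h3 : deriv g a * (s - a) = -(deriv g a * (a - s)) := by ring
    linarith

/-- For `ε ∈ (0, e⁻²)`: `(ε/2)s² ≤ F_ε(s) + 2` for all real `s`. -/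
theorem reg_entropy_global_lower_bound (ε : ℝ) (hε : ε ∈ Set.Ioo (0 : ℝ) (Real.exp (-2)))
    (Fε : ℝ → ℝ) (hC2 : ContDiff ℝ 2 Fε)
    (hF'' : ∀ s : ℝ, deriv (deriv Fε) s = (max ε (min s ε⁻¹))⁻¹)
    (hF'1 : deriv Fε 1 = 0) (hF1 : Fε 1 = 0) :
    ∀ s : ℝ, ε / 2 * s ^ 2 ≤ Fε s + 2 := by
  obtain ⟨hε0, hε2⟩ := hε
  have hε1 : ε < 1 := lt_trans hε2 (by
    rw [Real.exp_lt_one_iff]; norm_num)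
  have hinv1 : 1 < ε⁻¹ := (one_lt_inv₀ hε0).2 hε1
  have hεinv : ε ≤ ε⁻¹ := le_trans hε1.le hinv1.le
  have hεε : ε * ε⁻¹ = 1 := mul_inv_cancel₀ hε0.ne'
  have hd1 : Differentiable ℝ Fε := hC2.differentiable (by norm_num)
  have hC1' : ContDiff ℝ 1 (deriv Fε) := by
    have h2 : ContDiff ℝ ((1 : ℕ∞) + 1) Fε := by
      convert hC2 using 2
      rfl
    exact (contDiff_succ_iff_deriv.1 h2).2.2
  have hd2 : Differentiable ℝ (deriv Fε) := hC1'.differentiable one_ne_zero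
  have hF''ge : ∀ x : ℝ, ε ≤ deriv (deriv Fε) x := by
    intro x
    rw [hF'' x]
    have hmaxpos : 0 < max ε (min x ε⁻¹) := lt_of_lt_of_le hε0 (le_max_left _ _)
    have hmaxle : max ε (min x ε⁻¹) ≤ ε⁻¹ := max_le hεinv (min_le_right _ _)
    calc ε = (ε⁻¹)⁻¹ := (inv_inv ε).symm
      _ ≤ (max ε (min x ε⁻¹))⁻¹ := by
        exact inv_anti₀ hmaxpos hmaxle
  have hmonoF' : Monotone (deriv Fε) :=
    monotone_of_deriv_nonneg hd2 (fun x => le_trans hε0.le (hF''ge x))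
  have hFnonneg : ∀ x : ℝ, 0 ≤ Fε x := by
    intro x
    have := tangent_line_le Fε hd1 hmonoF' 1 x
    rw [hF1, hF'1] at this
    simpa using this
  set h : ℝ → ℝ := fun x => Fε x - ε / 2 * x ^ 2 with hh
  have hdh : ∀ x : ℝ, HasDerivAt h (deriv Fε x - ε * x) x := by
    intro x
    have h1 := (hd1 x).hasDerivAt
    have h2 : HasDerivAt (fun x : ℝ => ε / 2 * x ^ 2) (ε * x) x := by
      have := (hasDerivAt_pow 2 x).const_mul (ε / 2)
      refine this.congr_deriv ?_
      push_cast; ring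
    exact h1.sub h2
  have hdh' : deriv h = fun x => deriv Fε x - ε * x := funext fun x => (hdh x).deriv
  have hdiffh : Differentiable ℝ h := fun x => (hdh x).differentiableAt
  have hmonoh : Monotone (deriv h) := by
    rw [hdh']
    have hdiff : Differentiable ℝ (fun x => deriv Fε x - ε * x) :=
      hd2.sub (differentiable_id.const_mul ε)
    apply monotone_of_deriv_nonneg hdiff
    intro x
    have hx : HasDerivAt (fun x => deriv Fε x - ε * x) (deriv (deriv Fε) x - ε * 1) x :=
      (hd2 x).hasDerivAt.sub ((hasDerivAt_id x).const_mul ε)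
    rw [hx.deriv]
    have := hF''ge x
    linarith
  have tangent : ∀ a x : ℝ, h a + deriv h a * (x - a) ≤ h x :=
    tangent_line_le h hdiffh hmonoh
  have h1val : h 1 = -(ε / 2) := by simp [hh, hF1]
  have hd1val : deriv h 1 = -ε := by rw [hdh']; simp [hF'1]
  have tangent1 : ∀ x : ℝ, ε / 2 - ε * x ≤ h x := by
    intro x
    have ht := tangent 1 x
    rw [h1val, hd1val] at ht
    have : -(ε / 2) + -ε * (x - 1) = ε / 2 - ε * x + (ε - ε) := by ring
    nlinarith
  -- value of deriv Fε at ε⁻¹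
  have hlog : deriv Fε ε⁻¹ = -Real.log ε := by
    obtain ⟨c, hc, hcd⟩ := exists_hasDerivAt_eq_slope
      (fun x => deriv Fε x - Real.log x) (fun _ => 0) hinv1
      (hd2.continuous.continuousOn.sub
        (Real.continuousOn_log.mono (by
          intro x hx
          have : (1:ℝ) ≤ x := hx.1
          simp only [Set.mem_compl_iff, Set.mem_singleton_iff]
          linarith)))
      (fun x hx => by
        have hx1 : 1 < x := hx.1
        have hx2 : x < ε⁻¹ := hx.2
        have hxpos : 0 < x := lt_trans one_pos hx1
        have hder1 : HasDerivAt (deriv Fε) (x⁻¹) x := by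
          have := (hd2 x).hasDerivAt
          have heq : deriv (deriv Fε) x = x⁻¹ := by
            rw [hF'' x]
            rw [min_eq_left hx2.le, max_eq_right (by linarith)]
          rwa [heq] at this
        have hder2 : HasDerivAt Real.log (x⁻¹) x := Real.hasDerivAt_log hxpos.ne'
        have := hder1.sub hder2
        exact (by simpa using this : HasDerivAt (deriv Fε - Real.log) 0 x))
    have hne : ε⁻¹ - 1 ≠ 0 := by linarith
    have := hcd.symm
    rw [div_eq_iff hne] at this
    have hlog1 : Real.log 1 = 0 := Real.log_one
    have hloginv : Real.log ε⁻¹ = -Real.log ε := Real.log_inv ε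
    simp only [hlog1, hF'1] at this
    -- this : deriv Fε ε⁻¹ - Real.log ε⁻¹ - (0 - 0) = 0 * (ε⁻¹ - 1)
    rw [hloginv] at this
    linarith [this]
  have hlogε : Real.log ε < -2 := by
    have := Real.log_lt_log hε0 hε2
    rwa [Real.log_exp] at this
  intro s
  rcases le_or_gt s 0 with hs0 | hs0
  · -- s ≤ 0
    have ht := tangent 0 s
    have h0val : h 0 = Fε 0 := by simp [hh]
    have hd0val : deriv h 0 = deriv Fε 0 := by rw [hdh']; simp
    rw [h0val, hd0val] at ht
    have hF'0 : deriv Fε 0 ≤ 0 := by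
      have := hmonoF' (by norm_num : (0:ℝ) ≤ 1)
      rwa [hF'1] at this
    have hprod : 0 ≤ deriv Fε 0 * (s - 0) := by
      have := mul_nonneg (neg_nonneg.2 hF'0) (neg_nonneg.2 (by linarith : s - 0 ≤ 0))
      nlinarith
    have hF0 : 0 ≤ Fε 0 := hFnonneg 0
    have : 0 ≤ h s := by linarith
    have : ε / 2 * s ^ 2 ≤ Fε s := by simp only [hh] at this; linarith
    linarith
  rcases le_or_gt s ε⁻¹ with hsinv | hsinv
  · -- 0 < s ≤ ε⁻¹
    have ht := tangent1 s
    have hεs : ε * s ≤ 1 := by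
      have h1 : ε * s ≤ ε * ε⁻¹ := mul_le_mul_of_nonneg_left hsinv hε0.le
      linarith [hεε ▸ h1]
    simp only [hh] at ht
    linarith
  · -- ε⁻¹ < s
    have ht := tangent ε⁻¹ s
    have hdval : deriv h ε⁻¹ = -Real.log ε - 1 := by
      rw [hdh']; simp only []; rw [hlog, hεε]
    have htv : ε / 2 - 1 ≤ h ε⁻¹ := by
      have := tangent1 ε⁻¹
      rw [hεε] at this
      linarith
    have hprod : 0 ≤ deriv h ε⁻¹ * (s - ε⁻¹) := by
      apply mul_nonneg
      · rw [hdval]; linarith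
      · linarith
    have : ε / 2 - 1 ≤ h s := by linarith
    simp only [hh] at this
    linarith
end
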